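/- Let G be a finite abelian group, G₀ ⊆ G a subset, and g ∈ G₀. Then the following six quantities are all equal: gcd{ v_g(B) : B ∈ B(G₀) }, gcd{ v_g(A) : A ∈ A(G₀) }, min{ v_g(A) : A ∈ A(G₀), v_g(A) > 0 }, min{ v_g(B) : B ∈ B(G₀), v_g(B) > 0 }, min{ k ∈ ℕ, k ≥ 1 : k·g ∈ ⟨G₀ \ {g}⟩ }, and gcd{ k ∈ ℕ, k ≥ 1 : k·g ∈ ⟨G₀ \ {g}⟩ }. In particular, this common value divides ord(g). -/

import Mathlib

/- Common definitions for zero-sum theory over a finite abelian group. -/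

variable {G : Type*} [AddCommGroup G]

/-- `S` is a zero-sum sequence over the subset `G₀`:
a finite multiset of elements of `G₀` whose sum is `0`. -/
def IsZeroSumSeq (G₀ : Set G) (S : Multiset G) : Prop :=
  (∀ g ∈ S, g ∈ G₀) ∧ S.sum = 0

/-- `A` is an atom (minimal zero-sum sequence) over `G₀`: a nonempty zero-sum
sequence over `G₀` that cannot be written as the union of two nonempty
zero-sum sequences, i.e. has no proper nonempty zero-sum subsequence. -/
def IsAtomOver (G₀ : Set G) (A : Multiset G) : Prop :=
  IsZeroSumSeq G₀ A ∧ A ≠ 0 ∧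
    ∀ B : Multiset G, B ≤ A → B ≠ 0 → B ≠ A → B.sum ≠ 0

/-- The set of lengths `L(B)` of a zero-sum sequence `B` over `G₀`: all `k`
such that `B` is a union of `k` atoms over `G₀`. -/
def lengthSet (G₀ : Set G) (B : Multiset G) : Set ℕ :=
  { k | ∃ f : Multiset (Multiset G), f.card = k ∧ (∀ A ∈ f, IsAtomOver G₀ A) ∧ f.sum = B }

/-- The set of successive distances `Δ(L)` of a set `L ⊆ ℕ`. -/
def distSet (L : Set ℕ) : Set ℕ :=
  { d | ∃ a ∈ L, ∃ b ∈ L, a < b ∧ b - a = d ∧ ∀ c ∈ L, a < c → c < b → False }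

/-- The set of distances `Δ(G₀)`: union of `Δ(L(B))` over all nonempty
zero-sum sequences `B` over `G₀`. -/
def DeltaOf (G₀ : Set G) : Set ℕ :=
  ⋃ B : Multiset G, ⋃ (_ : B ≠ 0), distSet (lengthSet G₀ B)

/-- The set of minimal distances `Δ*(G) = { min Δ(G₀) : G₀ ⊆ G, Δ(G₀) ≠ ∅ }`. -/
def DeltaStar (G : Type*) [AddCommGroup G] : Set ℕ :=
  { d | ∃ G₀ : Set G, (DeltaOf G₀).Nonempty ∧ sInf (DeltaOf G₀) = d }

/-- The cross number `k(S) = Σ_{g ∈ S} 1/ord(g)` (with multiplicity). -/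
noncomputable def crossNumber (S : Multiset G) : ℚ :=
  (S.map fun g => ((addOrderOf g : ℚ))⁻¹).sum

/-- `G₀` is an LCN-set: every atom over `G₀` has cross number at least `1`. -/
def IsLCNSet (G₀ : Set G) : Prop :=
  ∀ A : Multiset G, IsAtomOver G₀ A → 1 ≤ crossNumber A

/-- `r` is the rank of the finite abelian group `G`: the number of summands
in the invariant factor decomposition `G ≅ C_{n₁} ⊕ ... ⊕ C_{n_r}` with
`1 < n₁ ∣ n₂ ∣ ... ∣ n_r`. -/
def IsRank (G : Type*) [AddCommGroup G] (r : ℕ) : Prop :=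
  ∃ d : Fin r → ℕ, (∀ i, 1 < d i) ∧ (∀ i j, i ≤ j → d i ∣ d j) ∧
    Nonempty (G ≃+ ((i : Fin r) → ZMod (d i)))

/-- The system of sets of lengths `𝓛(G) = { L(B) : B ∈ 𝓑(G) nonempty }`. -/
def LSystem (G : Type*) [AddCommGroup G] : Set (Set ℕ) :=
  { L | ∃ B : Multiset G, B ≠ 0 ∧ IsZeroSumSeq (Set.univ : Set G) B ∧
      lengthSet (Set.univ : Set G) B = L }

section GcdAux
variable {G : Type*} [AddCommGroup G] [Fintype G] [DecidableEq G]

set_option linter.unusedSectionVars false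

private lemma msum_nsmul (n : ℕ) (s : Multiset G) : (n • s).sum = n • s.sum := by
  induction n with
  | zero => simp
  | succ k ih => simp [succ_nsmul, ih, add_nsmul]

private lemma repr_closure (G₀ : Set G) (g : G) {x : G}
    (hx : x ∈ AddSubgroup.closure (G₀ \ {g})) :
    ∃ T : Multiset G, (∀ t ∈ T, t ∈ G₀ \ {g}) ∧ T.sum = x := by
  induction hx using AddSubgroup.closure_induction with
  | mem y hy =>
      refine ⟨{y}, ?_, by simp⟩
      intro t ht
      rw [Multiset.mem_singleton.1 ht]; exact hy
  | zero => exact ⟨0, by simp, by simp⟩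
  | add x y hx hy ihx ihy =>
      obtain ⟨T, hT, hs⟩ := ihx
      obtain ⟨U, hU, hus⟩ := ihy
      refine ⟨T + U, ?_, by simp [hs, hus]⟩
      intro t ht
      rcases Multiset.mem_add.1 ht with h | h
      · exact hT t h
      · exact hU t h
  | neg x hx ih =>
      obtain ⟨T, hT, hs⟩ := ih
      have hcard : 0 < Fintype.card G := Fintype.card_pos
      refine ⟨(Fintype.card G - 1) • T, ?_, ?_⟩
      · intro t ht
        exact hT t (Multiset.mem_nsmul.1 ht).2
      · rw [msum_nsmul, hs]
        have h0 : Fintype.card G • x = 0 := card_nsmul_eq_zero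
        have h1 : (Fintype.card G - 1) • x + x = 0 := by
          rw [← succ_nsmul, Nat.sub_add_cancel hcard, h0]
        exact eq_neg_of_add_eq_zero_left h1

private lemma count_smul_mem (G₀ : Set G) (g : G) {B : Multiset G}
    (hB : IsZeroSumSeq G₀ B) :
    (B.count g) • g ∈ AddSubgroup.closure (G₀ \ {g}) := by
  have hsplit : B.filter (fun x => x = g) + B.filter (fun x => ¬ x = g) = B :=
    Multiset.filter_add_not _ B
  have heq : B.filter (fun x => x = g) = Multiset.replicate (B.count g) g :=
    Multiset.filter_eq' B g
  have hRmem : ∀ t ∈ B.filter (fun x => ¬ x = g), t ∈ G₀ \ {g} := by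
    intro t ht
    rw [Multiset.mem_filter] at ht
    exact ⟨hB.1 t ht.1, ht.2⟩
  set R := B.filter (fun x => ¬ x = g) with hR
  have hRH : R.sum ∈ AddSubgroup.closure (G₀ \ {g}) :=
    AddSubgroup.multiset_sum_mem _ _ (fun t ht => AddSubgroup.subset_closure (hRmem t ht))
  have hsum : (B.count g) • g + R.sum = 0 := by
    have := congrArg Multiset.sum hsplit
    rw [Multiset.sum_add, heq, Multiset.sum_replicate] at this
    rw [this, hB.2]
  rw [eq_neg_of_add_eq_zero_left hsum]
  exact neg_mem hRH

end GcdAux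

/-- `d` is the greatest common divisor of the set `S ⊆ ℕ`. -/
def IsSetGcd (S : Set ℕ) (d : ℕ) : Prop :=
  (∀ s ∈ S, d ∣ s) ∧ ∀ e : ℕ, (∀ s ∈ S, e ∣ s) → e ∣ d

theorem gcd_min_multiplicities
    (G : Type*) [AddCommGroup G] [Fintype G] [DecidableEq G]
    (G₀ : Set G) (g : G) (hg : g ∈ G₀) :
    ∃ d : ℕ,
      IsSetGcd { v | ∃ B : Multiset G, IsZeroSumSeq G₀ B ∧ Multiset.count g B = v } d ∧
      IsSetGcd { v | ∃ A : Multiset G, IsAtomOver G₀ A ∧ Multiset.count g A = v } d ∧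
      IsLeast { v | 0 < v ∧
        ∃ A : Multiset G, IsAtomOver G₀ A ∧ Multiset.count g A = v } d ∧
      IsLeast { v | 0 < v ∧
        ∃ B : Multiset G, IsZeroSumSeq G₀ B ∧ Multiset.count g B = v } d ∧
      IsLeast { m : ℕ | 0 < m ∧ m • g ∈ AddSubgroup.closure (G₀ \ {g}) } d ∧
      IsSetGcd { m : ℕ | 0 < m ∧ m • g ∈ AddSubgroup.closure (G₀ \ {g}) } d ∧
      d ∣ addOrderOf g := by
  classical
  set H := AddSubgroup.closure (G₀ \ {g}) with hH
  set M : Set ℕ := { m : ℕ | 0 < m ∧ m • g ∈ H } with hM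
  -- M is nonempty: addOrderOf g works
  have hord_pos : 0 < addOrderOf g := addOrderOf_pos g
  have hordM : addOrderOf g ∈ M := by
    refine ⟨hord_pos, ?_⟩
    rw [addOrderOf_nsmul_eq_zero g]
    exact zero_mem H
  have hMne : M.Nonempty := ⟨_, hordM⟩
  set d := sInf M with hd
  have hdM : d ∈ M := Nat.sInf_mem hMne
  have hd_pos : 0 < d := hdM.1
  have hd_le : ∀ m ∈ M, d ≤ m := fun m hm => Nat.sInf_le hm
  -- key divisibility: if m • g ∈ H then d ∣ m
  have hdvd : ∀ m : ℕ, m • g ∈ H → d ∣ m := by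
    intro m hm
    have hr : (m % d) • g ∈ H := by
      have h1 : (d * (m / d)) • g ∈ H := by
        rw [mul_nsmul]
        exact AddSubgroup.nsmul_mem H hdM.2 _
      have h2 : m % d + d * (m / d) = m := Nat.mod_add_div m d
      have h3 : (m % d) • g + (d * (m / d)) • g = m • g := by
        rw [← add_nsmul, h2]
      have : (m % d) • g = m • g - (d * (m / d)) • g := by
        rw [← h3]; abel
      rw [this]
      exact sub_mem hm h1
    by_contra hnd
    have hpos : 0 < m % d := Nat.pos_of_ne_zero (fun h0 => hnd (Nat.dvd_of_mod_eq_zero h0))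
    have : d ≤ m % d := hd_le _ ⟨hpos, hr⟩
    exact absurd this (not_le.2 (Nat.mod_lt m hd_pos))
  -- build a zero-sum sequence B₀ with count g B₀ = d
  obtain ⟨T, hT, hTsum⟩ := repr_closure G₀ g (neg_mem hdM.2)
  set B₀ : Multiset G := Multiset.replicate d g + T with hB₀
  have hgT : g ∉ T := fun h => (hT g h).2 rfl
  have hB₀zs : IsZeroSumSeq G₀ B₀ := by
    constructor
    · intro x hx
      rcases Multiset.mem_add.1 hx with h | h
      · rw [Multiset.eq_of_mem_replicate h]; exact hg
      · exact (hT x h).1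
    · rw [Multiset.sum_add, Multiset.sum_replicate, hTsum]
      simp
  have hB₀count : Multiset.count g B₀ = d := by
    rw [hB₀, Multiset.count_add, Multiset.count_replicate_self,
      Multiset.count_eq_zero_of_notMem hgT]
    omega
  -- extract an atom with count g = d: take minimal-card zero-sum subseq with positive count
  set S : Set ℕ := { n | ∃ C : Multiset G, C ≤ B₀ ∧ C.sum = 0 ∧ 0 < Multiset.count g C ∧
    Multiset.card C = n } with hS
  have hSne : S.Nonempty := ⟨Multiset.card B₀, B₀, le_refl _, hB₀zs.2,
    hB₀count ▸ hd_pos, rfl⟩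
  obtain ⟨A, hAle, hAsum, hAcount, hAcard⟩ := Nat.sInf_mem hSne
  have hAmin : ∀ C : Multiset G, C ≤ B₀ → C.sum = 0 → 0 < Multiset.count g C →
      Multiset.card A ≤ Multiset.card C := by
    intro C h1 h2 h3
    rw [hAcard]
    exact Nat.sInf_le ⟨C, h1, h2, h3, rfl⟩
  have hAzs : IsZeroSumSeq G₀ A := by
    refine ⟨fun x hx => hB₀zs.1 x (Multiset.mem_of_le hAle hx), hAsum⟩
  have hAne : A ≠ 0 := by
    intro h; rw [h] at hAcount; simp at hAcount
  have hAatom : IsAtomOver G₀ A := by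
    refine ⟨hAzs, hAne, ?_⟩
    intro C hCle hCne hCA hCsum
    have hDsum : (A - C).sum = 0 := by
      have hAC : C + (A - C) = A := add_tsub_cancel_of_le hCle
      have := congrArg Multiset.sum hAC
      rw [Multiset.sum_add, hCsum, zero_add] at this
      rw [this, hAsum]
    have hDne : A - C ≠ 0 := by
      intro h
      exact hCA (le_antisymm hCle (tsub_eq_zero_iff_le.1 h))
    have hcount : Multiset.count g C + Multiset.count g (A - C) = Multiset.count g A := by
      have hAC : C + (A - C) = A := add_tsub_cancel_of_le hCle
      conv_rhs => rw [← hAC, Multiset.count_add]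
    have hcardC : Multiset.card C < Multiset.card A := by
      have h1 : Multiset.card C ≤ Multiset.card A := Multiset.card_le_card hCle
      rcases lt_or_eq_of_le h1 with h | h
      · exact h
      · exact absurd (Multiset.eq_of_le_of_card_le hCle (le_of_eq h.symm)) hCA
    have hcardD : Multiset.card (A - C) < Multiset.card A := by
      have hAC : C + (A - C) = A := add_tsub_cancel_of_le hCle
      have := congrArg Multiset.card hAC
      rw [Multiset.card_add] at this
      have hCpos : 0 < Multiset.card C := Multiset.card_pos.2 hCne
      omega
    rcases Nat.eq_zero_or_pos (Multiset.count g C) with h | h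
    · have hDpos : 0 < Multiset.count g (A - C) := by omega
      have := hAmin (A - C) (le_trans (Multiset.sub_le_self A C) hAle) hDsum hDpos
      omega
    · have := hAmin C (le_trans hCle hAle) hCsum h
      omega
  -- count g A = d
  have hAcount_d : Multiset.count g A = d := by
    have h1 : d ∣ Multiset.count g A := hdvd _ (count_smul_mem G₀ g hAzs)
    have h2 : Multiset.count g A ≤ Multiset.count g B₀ := Multiset.count_le_of_le g hAle
    rw [hB₀count] at h2
    have h3 : d ≤ Multiset.count g A := Nat.le_of_dvd hAcount h1
    omega
  refine ⟨d, ?_, ?_, ?_, ?_, ?_, ?_, ?_⟩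
  · -- gcd over zero-sum sequences
    constructor
    · rintro v ⟨B, hB, rfl⟩
      exact hdvd _ (count_smul_mem G₀ g hB)
    · intro e he
      exact he d ⟨A, hAatom.1, hAcount_d⟩
  · -- gcd over atoms
    constructor
    · rintro v ⟨B, hB, rfl⟩
      exact hdvd _ (count_smul_mem G₀ g hB.1)
    · intro e he
      exact he d ⟨A, hAatom, hAcount_d⟩
  · -- least positive atom count
    constructor
    · exact ⟨hd_pos, A, hAatom, hAcount_d⟩
    · rintro v ⟨hv, B, hB, rfl⟩
      exact hd_le _ ⟨hv, count_smul_mem G₀ g hB.1⟩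
  · -- least positive zero-sum count
    constructor
    · exact ⟨hd_pos, A, hAatom.1, hAcount_d⟩
    · rintro v ⟨hv, B, hB, rfl⟩
      exact hd_le _ ⟨hv, count_smul_mem G₀ g hB⟩
  · -- least of M
    exact ⟨hdM, fun m hm => hd_le m hm⟩
  · -- gcd of M
    constructor
    · rintro m ⟨_, hm⟩
      exact hdvd m hm
    · intro e he
      exact he d hdM
  · exact hdvd _ (by rw [addOrderOf_nsmul_eq_zero g]; exact zero_mem H)
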